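/- Let X be a set and let f, g, h be bijections of X. Define the support of a bijection σ of X as supp(σ) := {x ∈ X : σ(x) ≠ x}, and for bijections a, b define the commutator [a, b] := a⁻¹ ∘ b⁻¹ ∘ a ∘ b. Assume that f(supp(g)) ∩ supp(g) = ∅ and f(supp(g)) ∩ supp(h) = ∅. Then g⁻¹ ∘ h ∘ g = [f⁻¹, g]⁻¹ ∘ h ∘ [f⁻¹, g]. -/

import Mathlib

/-- For bijections `f, g, h` of a set `X`, if `f(supp g)` is disjoint from
`supp g` and from `supp h`, then `g⁻¹ ∘ h ∘ g = [f⁻¹, g]⁻¹ ∘ h ∘ [f⁻¹, g]`, where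
`[a, b] := a⁻¹ ∘ b⁻¹ ∘ a ∘ b` (so `[f⁻¹, g] = f ∘ g⁻¹ ∘ f⁻¹ ∘ g`, i.e. the permutation
`f * g⁻¹ * f⁻¹ * g`). -/
theorem conjugation_by_commutator {X : Type*} (f g h : Equiv.Perm X)
    (h₁ : (⇑f '' {x : X | g x ≠ x}) ∩ {x : X | g x ≠ x} = ∅)
    (h₂ : (⇑f '' {x : X | g x ≠ x}) ∩ {x : X | h x ≠ x} = ∅) :
    g⁻¹ * h * g = (f * g⁻¹ * f⁻¹ * g)⁻¹ * h * (f * g⁻¹ * f⁻¹ * g) := by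
  have key : Commute (f * g⁻¹ * f⁻¹) h := by
    apply Equiv.Perm.Disjoint.commute
    intro x
    by_cases hx : (f * g⁻¹ * f⁻¹) x = x
    · exact Or.inl hx
    · right
      by_contra hhx
      have hmem : x ∈ (⇑f '' {x : X | g x ≠ x}) ∩ {x : X | h x ≠ x} := by
        refine ⟨⟨f⁻¹ x, ?_, by simp⟩, hhx⟩
        simp only [Set.mem_setOf_eq]
        intro hgx
        apply hx
        have hg' : g⁻¹ (f⁻¹ x) = f⁻¹ x := by
          exact Equiv.Perm.inv_eq_iff_eq.mpr hgx.symm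
        rw [Equiv.Perm.mul_apply, Equiv.Perm.mul_apply, hg']; simp
      rw [h₂] at hmem
      exact hmem
  have hc : (f * g⁻¹ * f⁻¹)⁻¹ * h * (f * g⁻¹ * f⁻¹) = h := by
    rw [mul_assoc, ← key.eq]; group
  calc g⁻¹ * h * g = g⁻¹ * ((f * g⁻¹ * f⁻¹)⁻¹ * h * (f * g⁻¹ * f⁻¹)) * g := by rw [hc]
    _ = (f * g⁻¹ * f⁻¹ * g)⁻¹ * h * (f * g⁻¹ * f⁻¹ * g) := by group
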